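/- Let d ∈ ℕ, 2 ≤ p < ∞, 2 ≤ θ ≤ ∞ and r ≥ 0. Then there is a constant C > 0 such that for every f ∈ S^{r+1−1/p−1/θ}_θ A one has ‖f‖_{S^r_{p,θ}B} ≤ C · ‖f‖_{S^{r+1−1/p−1/θ}_θ A}, i.e. S^{r+1−1/p−1/θ}_θ A ↪ S^r_{p,θ}B. -/

import Mathlib

open MeasureTheory Real ENNReal

noncomputable section

namespace Paper

/-- The fundamental domain `[0,1)^d` of the `d`-dimensional torus `𝕋^d`. -/
def cube (d : ℕ) : Set (Fin d → ℝ) := Set.univ.pi fun _ => Set.Ico (0:ℝ) 1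

/-- The trigonometric character `x ↦ e^{2π i k·x}`. -/
def expk (d : ℕ) (k : Fin d → ℤ) (x : Fin d → ℝ) : ℂ :=
  Complex.exp (((2 * Real.pi * ∑ i, (k i : ℝ) * x i : ℝ) : ℂ) * Complex.I)

/-- Fourier coefficient `f̂(k) = ∫_{[0,1)^d} f(x) e^{-2π i k·x} dx`. -/
def fCoeff (d : ℕ) (f : (Fin d → ℝ) → ℂ) (k : Fin d → ℤ) : ℂ :=
  ∫ x in cube d, f x * expk d (-k) x

/-- The `L_q` (quasi-)norm on the torus, `q ∈ (0,∞]`, valued in `ℝ≥0∞`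
(for `q = ∞` this is the essential supremum). -/
def LqNorm (d : ℕ) (q : ℝ≥0∞) (f : (Fin d → ℝ) → ℂ) : ℝ≥0∞ :=
  eLpNorm f q (volume.restrict (cube d))

/-- The weight `∏_{i=1}^d (1+|k_i|)`. -/
def wt (d : ℕ) (k : Fin d → ℤ) : ℝ := ∏ i, (1 + |(k i : ℝ)|)

/-- The weighted Wiener (quasi-)norm `‖f‖_{S^r_θ A}`
(with the sup modification for `θ = ∞`); `A_θ` corresponds to `r = 0`,
the Wiener algebra `A` to `r = 0`, `θ = 1`. -/
def wienerNorm (d : ℕ) (r : ℝ) (θ : ℝ≥0∞) (f : (Fin d → ℝ) → ℂ) : ℝ≥0∞ :=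
  if θ = ∞ then ⨆ k : Fin d → ℤ, ENNReal.ofReal (wt d k ^ r) * (‖fCoeff d f k‖₊ : ℝ≥0∞)
  else (∑' k : Fin d → ℤ,
      (ENNReal.ofReal (wt d k ^ r) * (‖fCoeff d f k‖₊ : ℝ≥0∞)) ^ θ.toReal) ^ (1 / θ.toReal)

/-- Trigonometric polynomials with at most `m` terms. -/
def trigPoly (d m : ℕ) : Set ((Fin d → ℝ) → ℂ) :=
  {s | ∃ (Λ : Finset (Fin d → ℤ)) (a : (Fin d → ℤ) → ℂ),
    Λ.card ≤ m ∧ s = fun x => ∑ k ∈ Λ, a k * expk d k x}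

/-- Best `m`-term trigonometric approximation error of `f`, error measured by `X`. -/
def sigmaF (d m : ℕ) (X : ((Fin d → ℝ) → ℂ) → ℝ≥0∞) (f : (Fin d → ℝ) → ℂ) : ℝ≥0∞ :=
  ⨅ s ∈ trigPoly d m, X (f - s)

/-- The unit ball of the space (inside `L₁(𝕋^d)`) with (quasi-)norm `N`. -/
def unitBall (d : ℕ) (N : ((Fin d → ℝ) → ℂ) → ℝ≥0∞) : Set ((Fin d → ℝ) → ℂ) :=
  {f | IntegrableOn f (cube d) ∧ N f ≤ 1}

/-- Best `m`-term trigonometric width of the unit ball of `N`, error measured by `X`. -/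
def sigmaClass (d m : ℕ) (N X : ((Fin d → ℝ) → ℂ) → ℝ≥0∞) : ℝ≥0∞ :=
  ⨆ f ∈ unitBall d N, sigmaF d m X f

/-- `log*(m) = max (log₂ m) 1`. -/
def logStar (m : ℕ) : ℝ := max (Real.logb 2 m) 1

/-- Two-sided asymptotic equivalence `a_m ≍ b_m`. -/
def IsAsympEquiv (a : ℕ → ℝ≥0∞) (b : ℕ → ℝ) : Prop :=
  ∃ c C : ℝ, 0 < c ∧ 0 < C ∧ ∃ m₀ : ℕ, ∀ m : ℕ, m₀ ≤ m →
    ENNReal.ofReal (c * b m) ≤ a m ∧ a m ≤ ENNReal.ofReal (C * b m)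

/-- One-sided asymptotic bound `a_m ≲ b_m`. -/
def IsAsympLe (a : ℕ → ℝ≥0∞) (b : ℕ → ℝ) : Prop :=
  ∃ C : ℝ, 0 < C ∧ ∃ m₀ : ℕ, ∀ m : ℕ, m₀ ≤ m → a m ≤ ENNReal.ofReal (C * b m)

/-- Dyadic block `I_0 = {0}`, `I_n = {k : 2^{n-1} ≤ |k| < 2^n}` for `n ≥ 1`. -/
def blockF (n : ℕ) : Finset ℤ :=
  (Finset.Icc (-(2^n : ℤ)) (2^n)).filter fun k =>
    (n = 0 ∧ k = 0) ∨ (n ≠ 0 ∧ 2^(n-1) ≤ |k| ∧ |k| < 2^n)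

/-- The dyadic block projection `∑_{k ∈ I_j} f̂(k) e^{2π i k·x}`. -/
def blockProj (d : ℕ) (f : (Fin d → ℝ) → ℂ) (j : Fin d → ℕ) : (Fin d → ℝ) → ℂ :=
  fun x => ∑ k ∈ Fintype.piFinset (fun i => blockF (j i)), fCoeff d f k * expk d k x

/-- The mixed-smoothness Besov (quasi-)norm `‖f‖_{S^s_{p,θ}B}`
(with the sup modification for `θ = ∞`). -/
def besovNorm (d : ℕ) (s : ℝ) (p θ : ℝ≥0∞) (f : (Fin d → ℝ) → ℂ) : ℝ≥0∞ :=
  if θ = ∞ then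
    ⨆ j : Fin d → ℕ,
      ENNReal.ofReal ((2:ℝ) ^ (((∑ i, j i : ℕ) : ℝ) * s)) * LqNorm d p (blockProj d f j)
  else
    (∑' j : Fin d → ℕ,
      (ENNReal.ofReal ((2:ℝ) ^ (((∑ i, j i : ℕ) : ℝ) * s)) * LqNorm d p (blockProj d f j))
        ^ θ.toReal) ^ (1 / θ.toReal)

/-- The mixed-smoothness Sobolev norm `‖f‖_{S^s_p W}` (Littlewood–Paley form),
with `S^0_p W := L_p`. -/
def sobolevNorm (d : ℕ) (s : ℝ) (p : ℝ≥0∞) (f : (Fin d → ℝ) → ℂ) : ℝ≥0∞ :=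
  if s = 0 then LqNorm d p f
  else
    (∫⁻ x in cube d,
      ((∑' j : Fin d → ℕ,
        (ENNReal.ofReal ((2:ℝ) ^ (((∑ i, j i : ℕ) : ℝ) * s)) *
          (‖blockProj d f j x‖₊ : ℝ≥0∞)) ^ (2:ℕ)) ^ ((1:ℝ)/2)) ^ p.toReal) ^ (1 / p.toReal)

/-- Trigonometric polynomials with frequencies in `[-M,M]^d`. -/
def boxPoly (d M : ℕ) : Set ((Fin d → ℝ) → ℂ) :=
  {s | ∃ (Λ : Finset (Fin d → ℤ)) (a : (Fin d → ℤ) → ℂ),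
    (∀ k ∈ Λ, ∀ i, |k i| ≤ (M : ℤ)) ∧ s = fun x => ∑ k ∈ Λ, a k * expk d k x}

/-- Error of best approximation by trigonometric polynomials with
frequencies in `[-M,M]^d`, measured in `L_∞`. -/
def EBox (d M : ℕ) (f : (Fin d → ℝ) → ℂ) : ℝ≥0∞ :=
  ⨅ g ∈ boxPoly d M, LqNorm d ∞ (f - g)

/-- The `m`-th (non-linear) sampling width of the class of continuous functions
in the unit ball of `N`, error measured in `L_q`. -/
def samplingWidth (d m : ℕ) (N : ((Fin d → ℝ) → ℂ) → ℝ≥0∞) (q : ℝ≥0∞) : ℝ≥0∞ :=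
  ⨅ (t : Fin m → (Fin d → ℝ)) (_ : ∀ i, t i ∈ cube d)
    (R : (Fin m → ℂ) → ((Fin d → ℝ) → ℂ)),
    ⨆ f ∈ {f : (Fin d → ℝ) → ℂ | Continuous f ∧ N f ≤ 1},
      LqNorm d q (f - R fun i => f (t i))


lemma measurableSet_cube (d : ℕ) : MeasurableSet (cube d) :=
  MeasurableSet.univ_pi fun _ => measurableSet_Ico

lemma volume_cube (d : ℕ) : volume (cube d) = 1 := by
  rw [cube, volume_pi, Measure.pi_pi]
  simp

lemma continuous_expk (d : ℕ) (k : Fin d → ℤ) : Continuous (expk d k) := by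
  unfold expk
  fun_prop

lemma norm_expk (d : ℕ) (k : Fin d → ℤ) (x : Fin d → ℝ) : ‖expk d k x‖ = 1 := by
  unfold expk
  exact Complex.norm_exp_ofReal_mul_I _

lemma expk_mul (d : ℕ) (k l : Fin d → ℤ) (x : Fin d → ℝ) :
    expk d k x * expk d l x = expk d (k + l) x := by
  unfold expk
  rw [← Complex.exp_add]
  congr 1
  push_cast
  rw [← add_mul, ← mul_add, ← Finset.sum_add_distrib]
  norm_num [add_mul]

lemma conj_expk (d : ℕ) (k : Fin d → ℤ) (x : Fin d → ℝ) :
    (starRingEnd ℂ) (expk d k x) = expk d (-k) x := by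
  unfold expk
  rw [← Complex.exp_conj, map_mul, Complex.conj_I, Complex.conj_ofReal]
  congr 1
  simp only [Pi.neg_apply, Int.cast_neg]
  push_cast
  simp only [neg_mul, Finset.sum_neg_distrib]
  ring

lemma integral_expk1 (k : ℤ) :
    ∫ x in Set.Ico (0:ℝ) 1, Complex.exp (((2 * Real.pi * (k * x) : ℝ) : ℂ) * Complex.I)
      = if k = 0 then 1 else 0 := by
  rcases eq_or_ne k 0 with hk | hk
  · simp [hk]
  · rw [if_neg hk, MeasureTheory.Measure.restrict_congr_set Ico_ae_eq_Ioc,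
      ← intervalIntegral.integral_of_le (by norm_num : (0:ℝ) ≤ 1)]
    have hc : ((2 * Real.pi * k : ℂ) * Complex.I) ≠ 0 := by
      simp [Real.pi_ne_zero, Complex.ext_iff, hk]
    have : ∀ x : ℝ, (((2 * Real.pi * (k * x) : ℝ) : ℂ) * Complex.I)
        = ((2 * Real.pi * k : ℂ) * Complex.I) * x := by
      intro x; push_cast; ring
    simp_rw [this]
    rw [integral_exp_mul_complex hc]
    have h1 : ((2 * Real.pi * k : ℂ) * Complex.I) * ((1:ℝ):ℂ) = k * (2 * Real.pi * Complex.I) := by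
      push_cast; ring
    rw [h1, Complex.exp_int_mul_two_pi_mul_I]
    simp


lemma expk_eq_prod (d : ℕ) (m : Fin d → ℤ) (x : Fin d → ℝ) :
    expk d m x = ∏ i, Complex.exp (((2 * Real.pi * (m i * x i) : ℝ) : ℂ) * Complex.I) := by
  rw [← Complex.exp_sum]
  unfold expk
  congr 1
  rw [← Finset.sum_mul]
  congr 1
  push_cast
  rw [Finset.mul_sum]

lemma integral_expk (d : ℕ) (m : Fin d → ℤ) :
    ∫ x in cube d, expk d m x = if m = 0 then 1 else 0 := by
  set g : Fin d → ℝ → ℂ :=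
    fun i t => Complex.exp (((2 * Real.pi * (m i * t) : ℝ) : ℂ) * Complex.I) with hg
  have h1 : ∫ x in cube d, expk d m x
      = ∫ x : Fin d → ℝ, ∏ i, (Set.Ico (0:ℝ) 1).indicator (g i) (x i) := by
    rw [← MeasureTheory.integral_indicator (measurableSet_cube d)]
    congr 1
    funext x
    by_cases hx : x ∈ cube d
    · rw [Set.indicator_of_mem hx, expk_eq_prod]
      refine Finset.prod_congr rfl fun i _ => ?_
      rw [Set.indicator_of_mem (hx i (Set.mem_univ i))]
    · rw [Set.indicator_of_notMem hx]
      rw [cube, Set.mem_pi] at hx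
      push_neg at hx
      obtain ⟨i, -, hi⟩ := hx
      exact (Finset.prod_eq_zero (Finset.mem_univ i)
        (by rw [Set.indicator_of_notMem hi])).symm
  rw [h1, volume_pi, MeasureTheory.integral_fintype_prod_eq_prod
    (fun i => (Set.Ico (0:ℝ) 1).indicator (g i))]
  have h2 : ∀ i, ∫ t : ℝ, (Set.Ico (0:ℝ) 1).indicator (g i) t
      = if m i = 0 then 1 else 0 := by
    intro i
    rw [MeasureTheory.integral_indicator measurableSet_Ico]
    exact integral_expk1 (m i)
  simp_rw [h2]
  rcases eq_or_ne m 0 with hm | hm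
  · simp [hm]
  · rw [if_neg hm]
    obtain ⟨i, hi⟩ := Function.ne_iff.mp hm
    exact Finset.prod_eq_zero (Finset.mem_univ i) (by simpa using hi)


variable {d : ℕ} {Λ : Finset (Fin d → ℤ)} {a : (Fin d → ℤ) → ℂ}

lemma continuous_trig (d : ℕ) (Λ : Finset (Fin d → ℤ)) (a : (Fin d → ℤ) → ℂ) :
    Continuous (fun x => ∑ k ∈ Λ, a k * expk d k x) :=
  continuous_finset_sum _ fun k _ => (continuous_const.mul (continuous_expk d k))

lemma norm_trig_le (d : ℕ) (Λ : Finset (Fin d → ℤ)) (a : (Fin d → ℤ) → ℂ) (x : Fin d → ℝ) :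
    ‖∑ k ∈ Λ, a k * expk d k x‖ ≤ ∑ k ∈ Λ, ‖a k‖ := by
  refine (norm_sum_le _ _).trans (le_of_eq (Finset.sum_congr rfl fun k _ => ?_))
  rw [norm_mul, norm_expk, mul_one]

lemma integrableOn_bdd {E : Type*} [NormedAddCommGroup E] {g : (Fin d → ℝ) → E} (hg : Continuous g) (M : ℝ)
    (hM : ∀ x, ‖g x‖ ≤ M) : IntegrableOn g (cube d) := by
  refine Integrable.mono' (integrableOn_const ?_) hg.aestronglyMeasurable.restrict
    (Filter.Eventually.of_forall hM)
  rw [volume_cube]; exact one_lt_top.ne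

lemma parseval (d : ℕ) (Λ : Finset (Fin d → ℤ)) (a : (Fin d → ℤ) → ℂ) :
    ∫ x in cube d, (fun x => ∑ k ∈ Λ, a k * expk d k x) x *
        (starRingEnd ℂ) ((fun x => ∑ k ∈ Λ, a k * expk d k x) x)
      = ∑ k ∈ Λ, (‖a k‖:ℂ)^2 := by
  have hexpand : ∀ x, (∑ k ∈ Λ, a k * expk d k x) * (starRingEnd ℂ) (∑ k ∈ Λ, a k * expk d k x)
      = ∑ k ∈ Λ, ∑ l ∈ Λ, (a k * (starRingEnd ℂ) (a l)) * expk d (k + -l) x := by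
    intro x
    rw [map_sum, Finset.sum_mul_sum]
    refine Finset.sum_congr rfl fun k _ => Finset.sum_congr rfl fun l _ => ?_
    rw [map_mul, conj_expk, ← expk_mul]
    ring
  simp only [hexpand]
  have hint : ∀ (c : ℂ) (n : Fin d → ℤ), IntegrableOn (fun x => c * expk d n x) (cube d) := by
    intro c n
    refine integrableOn_bdd (continuous_const.mul (continuous_expk d n)) ‖c‖ fun x => ?_
    rw [norm_mul, norm_expk, mul_one]
  rw [MeasureTheory.integral_finset_sum _ (fun k _ =>
    MeasureTheory.integrable_finset_sum _ (fun l _ => hint _ _))]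
  refine Finset.sum_congr rfl fun k hk => ?_
  rw [MeasureTheory.integral_finset_sum _ (fun l _ => hint _ _)]
  have : ∀ l ∈ Λ, ∫ x in cube d, (a k * (starRingEnd ℂ) (a l)) * expk d (k + -l) x
      = if k = l then a k * (starRingEnd ℂ) (a k) else 0 := by
    intro l _
    rw [MeasureTheory.integral_const_mul, integral_expk]
    rcases eq_or_ne k l with h | h
    · simp [h]
    · rw [if_neg (by simpa [add_neg_eq_zero] using h), if_neg h, mul_zero]
  rw [Finset.sum_congr rfl this, Finset.sum_ite_eq Λ k
    (fun l => a k * (starRingEnd ℂ) (a k)), if_pos hk, Complex.mul_conj]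
  rw [Complex.normSq_eq_norm_sq]
  push_cast
  rfl

lemma integral_norm_sq (d : ℕ) (Λ : Finset (Fin d → ℤ)) (a : (Fin d → ℤ) → ℂ) :
    ∫ x in cube d, ‖∑ k ∈ Λ, a k * expk d k x‖^2 = ∑ k ∈ Λ, ‖a k‖^2 := by
  set t := fun x => ∑ k ∈ Λ, a k * expk d k x with ht
  have hpt : ∀ x, ‖t x‖^2 = (t x * (starRingEnd ℂ) (t x)).re := by
    intro x
    rw [Complex.mul_conj, Complex.normSq_eq_norm_sq, Complex.ofReal_re]
  show ∫ x in cube d, ‖t x‖^2 = _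
  simp only [hpt]
  have hint : IntegrableOn (fun x => t x * (starRingEnd ℂ) (t x)) (cube d) := by
    refine integrableOn_bdd ?_ ((∑ k ∈ Λ, ‖a k‖)^2) (fun x => ?_)
    · exact (continuous_trig d Λ a).mul (Complex.continuous_conj.comp (continuous_trig d Λ a))
    · rw [norm_mul, RCLike.norm_conj, sq]
      exact mul_le_mul (norm_trig_le d Λ a x) (norm_trig_le d Λ a x) (norm_nonneg _)
        (Finset.sum_nonneg fun k _ => norm_nonneg _)
  have hre := integral_re (𝕜 := ℂ) hint
  simp only [RCLike.re_to_complex] at hre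
  rw [hre, parseval d Λ a, Complex.re_sum]
  refine Finset.sum_congr rfl fun k _ => ?_
  norm_cast

lemma lintegral_sq (d : ℕ) (Λ : Finset (Fin d → ℤ)) (a : (Fin d → ℤ) → ℂ) :
    ∫⁻ x in cube d, (‖∑ k ∈ Λ, a k * expk d k x‖₊ : ℝ≥0∞) ^ (2:ℝ)
      = ∑ k ∈ Λ, (‖a k‖₊ : ℝ≥0∞) ^ (2:ℝ) := by
  set t := fun x => ∑ k ∈ Λ, a k * expk d k x with ht
  have h0 : ∀ z : ℂ, (‖z‖₊ : ℝ≥0∞) ^ (2:ℝ) = ENNReal.ofReal (‖z‖^2) := by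
    intro z
    rw [← enorm_eq_nnnorm, ← ofReal_norm,
      ENNReal.ofReal_rpow_of_nonneg (norm_nonneg _) (by norm_num : (0:ℝ) ≤ 2), Real.rpow_two]
  simp only [h0]
  have hti : IntegrableOn (fun x => ‖t x‖^2) (cube d) := by
    refine integrableOn_bdd (((continuous_trig d Λ a).norm.pow 2)) ((∑ k ∈ Λ, ‖a k‖)^2)
      (fun x => ?_)
    rw [Real.norm_eq_abs, abs_of_nonneg (sq_nonneg _)]
    exact pow_le_pow_left₀ (norm_nonneg _) (norm_trig_le d Λ a x) 2
  rw [← MeasureTheory.ofReal_integral_eq_lintegral_ofReal hti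
    (Filter.Eventually.of_forall fun x => sq_nonneg _), integral_norm_sq d Λ a,
    ENNReal.ofReal_sum_of_nonneg (fun k _ => sq_nonneg _)]

lemma eLpNorm_trig_le (d : ℕ) (Λ : Finset (Fin d → ℤ)) (a : (Fin d → ℤ) → ℂ)
    {p : ℝ≥0∞} (hp1 : 2 ≤ p) (hp2 : p ≠ ∞) :
    LqNorm d p (fun x => ∑ k ∈ Λ, a k * expk d k x) ≤
      (∑ k ∈ Λ, (‖a k‖₊ : ℝ≥0∞)) ^ (1 - 2/p.toReal) *
      (∑ k ∈ Λ, (‖a k‖₊ : ℝ≥0∞)^(2:ℝ)) ^ (1/p.toReal) := by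
  set t := fun x => ∑ k ∈ Λ, a k * expk d k x with ht
  set A := ∑ k ∈ Λ, (‖a k‖₊ : ℝ≥0∞) with hA
  set B := ∑ k ∈ Λ, (‖a k‖₊ : ℝ≥0∞)^(2:ℝ) with hB
  have hp0 : p ≠ 0 := by intro h; rw [h] at hp1; exact absurd hp1 (by simp)
  have hpR : 2 ≤ p.toReal := by
    have := ENNReal.toReal_mono hp2 hp1
    simpa using this
  have hAtop : A ≠ ∞ := by
    refine (ENNReal.sum_lt_top.2 fun k _ => ?_).ne
    exact ENNReal.coe_lt_top
  have hgA : ∀ x, (‖t x‖₊ : ℝ≥0∞) ≤ A := by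
    intro x
    rw [← enorm_eq_nnnorm, ← ofReal_norm, hA]
    calc ENNReal.ofReal ‖t x‖ ≤ ENNReal.ofReal (∑ k ∈ Λ, ‖a k‖) :=
          ENNReal.ofReal_le_ofReal (norm_trig_le d Λ a x)
      _ = ∑ k ∈ Λ, (‖a k‖₊ : ℝ≥0∞) := by
          rw [ENNReal.ofReal_sum_of_nonneg (fun k _ => norm_nonneg _)]
          exact Finset.sum_congr rfl fun k _ => ofReal_norm _
  have key : ∫⁻ x in cube d, (‖t x‖₊ : ℝ≥0∞) ^ p.toReal ≤ A ^ (p.toReal - 2) * B := by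
    calc ∫⁻ x in cube d, (‖t x‖₊ : ℝ≥0∞) ^ p.toReal
        ≤ ∫⁻ x in cube d, A ^ (p.toReal - 2) * (‖t x‖₊ : ℝ≥0∞) ^ (2:ℝ) := by
          refine lintegral_mono fun x => ?_
          have : (‖t x‖₊ : ℝ≥0∞) ^ p.toReal
              = (‖t x‖₊ : ℝ≥0∞) ^ (p.toReal - 2) * (‖t x‖₊ : ℝ≥0∞) ^ (2:ℝ) := by
            rw [← ENNReal.rpow_add_of_nonneg _ _ (by linarith) (by norm_num)]
            norm_num
          rw [this]
          exact mul_le_mul_left (ENNReal.rpow_le_rpow (hgA x) (by linarith)) _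
      _ = A ^ (p.toReal - 2) * B := by
          rw [lintegral_const_mul' _ _ (ENNReal.rpow_ne_top_of_nonneg (by linarith) hAtop),
            lintegral_sq d Λ a]
  rw [LqNorm, eLpNorm_eq_lintegral_rpow_enorm_toReal hp0 hp2]
  calc (∫⁻ x in cube d, (‖t x‖₊ : ℝ≥0∞) ^ p.toReal) ^ (1/p.toReal)
      ≤ (A ^ (p.toReal - 2) * B) ^ (1/p.toReal) :=
        ENNReal.rpow_le_rpow key (by positivity)
    _ = A ^ (1 - 2/p.toReal) * B ^ (1/p.toReal) := by
        rw [ENNReal.mul_rpow_of_nonneg _ _ (by positivity), ← ENNReal.rpow_mul]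
        congr 2
        field_simp


lemma holder_sum {ι : Type*} (Λ : Finset ι) (u : ι → ℝ≥0∞) {e : ℝ} (he : 1 ≤ e) :
    ∑ k ∈ Λ, u k ≤ (Λ.card : ℝ≥0∞) ^ (1 - 1/e) * (∑ k ∈ Λ, u k ^ e) ^ (1/e) := by
  have he0 : e ≠ 0 := by linarith
  rcases Finset.eq_empty_or_nonempty Λ with hΛ | hΛ
  · simp [hΛ]
  set N : ℝ≥0∞ := (Λ.card : ℝ≥0∞) with hN
  have hN0 : N ≠ 0 := by
    simp [hN, Finset.card_eq_zero, Finset.nonempty_iff_ne_empty.1 hΛ]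
  have hNt : N ≠ ∞ := by simp [hN]
  have hw : ∑ _k ∈ Λ, N⁻¹ = 1 := by
    rw [Finset.sum_const, nsmul_eq_mul, ← hN, ENNReal.mul_inv_cancel hN0 hNt]
  have hmean := ENNReal.rpow_arith_mean_le_arith_mean_rpow Λ (fun _ => N⁻¹) u hw he
  have h1 : (∑ k ∈ Λ, u k) ^ e ≤ N ^ (e - 1) * ∑ k ∈ Λ, u k ^ e := by
    have hL : (∑ k ∈ Λ, N⁻¹ * u k) = N⁻¹ * ∑ k ∈ Λ, u k := by rw [Finset.mul_sum]
    have hR : (∑ k ∈ Λ, N⁻¹ * u k ^ e) = N⁻¹ * ∑ k ∈ Λ, u k ^ e := by rw [Finset.mul_sum]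
    rw [hL, hR, ENNReal.mul_rpow_of_nonneg _ _ (by linarith)] at hmean
    calc (∑ k ∈ Λ, u k) ^ e
        = N ^ e * ((N⁻¹) ^ e * (∑ k ∈ Λ, u k) ^ e) := by
          rw [← mul_assoc, ← ENNReal.mul_rpow_of_nonneg _ _ (by linarith : (0:ℝ) ≤ e),
            ENNReal.mul_inv_cancel hN0 hNt, ENNReal.one_rpow, one_mul]
      _ ≤ N ^ e * (N⁻¹ * ∑ k ∈ Λ, u k ^ e) := mul_le_mul_right hmean _
      _ = N ^ (e - 1) * ∑ k ∈ Λ, u k ^ e := by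
          rw [← mul_assoc]
          congr 1
          rw [← ENNReal.rpow_neg_one N, ← ENNReal.rpow_add _ _ hN0 hNt]
          ring_nf
  calc ∑ k ∈ Λ, u k = ((∑ k ∈ Λ, u k) ^ e) ^ (1/e) := by
        rw [← ENNReal.rpow_mul, mul_one_div, div_self he0, ENNReal.rpow_one]
    _ ≤ (N ^ (e - 1) * ∑ k ∈ Λ, u k ^ e) ^ (1/e) := ENNReal.rpow_le_rpow h1 (by positivity)
    _ = N ^ (1 - 1/e) * (∑ k ∈ Λ, u k ^ e) ^ (1/e) := by
        rw [ENNReal.mul_rpow_of_nonneg _ _ (by positivity), ← ENNReal.rpow_mul]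
        congr 2
        field_simp

def blkIdx (k : ℤ) : ℕ := if k = 0 then 0 else Nat.log 2 k.natAbs + 1

lemma mem_blockF (n : ℕ) (k : ℤ) :
    k ∈ blockF n ↔ ((n = 0 ∧ k = 0) ∨ (n ≠ 0 ∧ 2^(n-1) ≤ |k| ∧ |k| < 2^n)) := by
  unfold blockF
  rw [Finset.mem_filter, Finset.mem_Icc]
  constructor
  · rintro ⟨-, h⟩; exact h
  · intro h
    refine ⟨?_, h⟩
    rcases h with ⟨-, rfl⟩ | ⟨-, -, h2⟩
    · exact ⟨neg_nonpos.mpr (by positivity), by positivity⟩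
    · rcases abs_lt.mp h2 with ⟨hl, hr⟩
      exact ⟨le_of_lt hl, le_of_lt hr⟩

lemma mem_blockF_self (k : ℤ) : k ∈ blockF (blkIdx k) := by
  rw [mem_blockF]
  rcases eq_or_ne k 0 with rfl | hk
  · left; exact ⟨by simp [blkIdx], rfl⟩
  · right
    have hk' : k.natAbs ≠ 0 := by simpa using hk
    have h1 : 2 ^ Nat.log 2 k.natAbs ≤ k.natAbs := Nat.pow_log_le_self 2 hk'
    have h2 : k.natAbs < 2 ^ (Nat.log 2 k.natAbs + 1) :=
      Nat.lt_pow_succ_log_self (by norm_num) _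
    have habs : |k| = (k.natAbs : ℤ) := Int.abs_eq_natAbs k
    refine ⟨?_, ?_, ?_⟩
    · simp [blkIdx, hk]
    · simp only [blkIdx, if_neg hk, Nat.add_sub_cancel, habs]
      exact_mod_cast h1
    · simp only [blkIdx, if_neg hk, habs]
      exact_mod_cast h2

lemma blkIdx_eq_of_mem {n : ℕ} {k : ℤ} (h : k ∈ blockF n) : n = blkIdx k := by
  have h2 := mem_blockF_self k
  rw [mem_blockF] at h h2
  set m := blkIdx k with hm
  rcases h with ⟨rfl, rfl⟩ | ⟨hn, hn1, hn2⟩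
  · rcases h2 with ⟨h0, -⟩ | ⟨-, hx, -⟩
    · exact h0.symm
    · simp at hx
      exact absurd hx (not_le.mpr (by positivity))
  · rcases h2 with ⟨h0, rfl⟩ | ⟨hm0, hm1, hm2⟩
    · simp at hn1
      exact absurd hn1 (not_le.mpr (by positivity))
    · have hnm : n - 1 < m := by
        by_contra hc
        push_neg at hc
        have : (2:ℤ)^m ≤ 2^(n-1) := pow_le_pow_right₀ (by norm_num) hc
        have := lt_of_lt_of_le hm2 (le_trans this hn1)
        exact absurd this (lt_irrefl _)
      have hmn : m - 1 < n := by
        by_contra hc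
        push_neg at hc
        have : (2:ℤ)^n ≤ 2^(m-1) := pow_le_pow_right₀ (by norm_num) hc
        have := lt_of_lt_of_le hn2 (le_trans this hm1)
        exact absurd this (lt_irrefl _)
      omega

lemma card_blockF (n : ℕ) : (blockF n).card ≤ 2^(n+2) := by
  have h1 : (blockF n).card ≤ (Finset.Icc (-(2^n:ℤ)) (2^n)).card :=
    Finset.card_le_card (Finset.filter_subset _ _)
  rw [Int.card_Icc] at h1
  have hc : ((2:ℤ)^n) = ((2^n : ℕ) : ℤ) := by push_cast; ring
  rw [hc] at h1
  have h2 : ((((2^n : ℕ) : ℤ)) + 1 - -(((2^n : ℕ) : ℤ))).toNat = 2 * 2^n + 1 := by omega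
  rw [h2] at h1
  have h3 : 1 ≤ 2^n := Nat.one_le_two_pow
  calc (blockF n).card ≤ 2*2^n+1 := h1
    _ ≤ 2^(n+2) := by rw [pow_succ, pow_succ]; omega

lemma wt_block_lower {n : ℕ} {k : ℤ} (h : k ∈ blockF n) :
    (2:ℝ)^n ≤ 2 * (1 + |(k:ℝ)|) := by
  rcases (mem_blockF n k).1 h with ⟨rfl, rfl⟩ | ⟨hn, h1, -⟩
  · norm_num
  · have habs : ((|k| : ℤ) : ℝ) = |(k:ℝ)| := by push_cast; rfl
    have h1R : (2:ℝ)^(n-1) ≤ |(k:ℝ)| := by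
      rw [← habs]
      exact_mod_cast h1
    have h2 : (2:ℝ)^n = 2 * 2^(n-1) := by
      rw [← pow_succ']
      congr 1
      omega
    nlinarith [abs_nonneg ((k:ℝ))]

lemma sum_blocks_le {d : ℕ} (h : (Fin d → ℤ) → ℝ≥0∞) :
    ∑' j : Fin d → ℕ, ∑ k ∈ Fintype.piFinset (fun i => blockF (j i)), h k
      ≤ ∑' k : Fin d → ℤ, h k := by
  set F : (Fin d → ℕ) → (Fin d → ℤ) → ℝ≥0∞ :=
    fun j k => if k ∈ Fintype.piFinset (fun i => blockF (j i)) then h k else 0 with hF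
  have h1 : ∀ j, ∑ k ∈ Fintype.piFinset (fun i => blockF (j i)), h k = ∑' k, F j k := by
    intro j
    rw [tsum_eq_sum (s := Fintype.piFinset (fun i => blockF (j i)))
      (fun k hk => if_neg hk)]
    exact Finset.sum_congr rfl fun k hk => (if_pos hk).symm
  calc ∑' j : Fin d → ℕ, ∑ k ∈ Fintype.piFinset (fun i => blockF (j i)), h k
      = ∑' j, ∑' k, F j k := tsum_congr h1
    _ = ∑' k, ∑' j, F j k := ENNReal.tsum_comm
    _ ≤ ∑' k, h k := by
        refine ENNReal.tsum_le_tsum fun k => ?_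
        have h2 : ∑' j, F j k = F (fun i => blkIdx (k i)) k := by
          refine tsum_eq_single _ fun j hj => ?_
          refine if_neg fun hmem => ?_
          rw [Fintype.mem_piFinset] at hmem
          exact hj (funext fun i => (blkIdx_eq_of_mem (hmem i)))
        rw [h2]
        exact (if_pos (Fintype.mem_piFinset.2 fun i => mem_blockF_self (k i))).le


lemma two_rpow (x : ℝ) : ENNReal.ofReal ((2:ℝ) ^ x) = (2:ℝ≥0∞) ^ x := by
  rw [← ENNReal.ofReal_rpow_of_pos (by norm_num : (0:ℝ) < 2)]
  norm_num

lemma wt_pos (d : ℕ) (k : Fin d → ℤ) : 0 < wt d k :=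
  Finset.prod_pos fun i _ => by positivity

lemma card_piFinset_le (d : ℕ) (j : Fin d → ℕ) :
    ((Fintype.piFinset (fun i => blockF (j i))).card : ℝ≥0∞)
      ≤ (2:ℝ≥0∞) ^ (((∑ i, j i : ℕ):ℝ) + 2*(d:ℝ)) := by
  have h1 : (Fintype.piFinset (fun i => blockF (j i))).card ≤ 2^(∑ i, j i + 2*d) := by
    rw [Fintype.card_piFinset]
    calc ∏ i, (blockF (j i)).card ≤ ∏ i : Fin d, 2^(j i + 2) :=
          Finset.prod_le_prod (fun _ _ => Nat.zero_le _) (fun i _ => card_blockF (j i))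
      _ = 2^(∑ i, (j i + 2)) := Finset.prod_pow_eq_pow_sum _ _ _
      _ = 2^(∑ i, j i + 2*d) := by
          congr 1
          rw [Finset.sum_add_distrib]
          simp [mul_comm]
  calc ((Fintype.piFinset (fun i => blockF (j i))).card : ℝ≥0∞)
      ≤ ((2^(∑ i, j i + 2*d) : ℕ) : ℝ≥0∞) := by exact_mod_cast h1
    _ = (2:ℝ≥0∞) ^ (((∑ i, j i + 2*d : ℕ)):ℝ) := by
        rw [Nat.cast_pow, ← ENNReal.rpow_natCast]
        norm_num
    _ = (2:ℝ≥0∞) ^ (((∑ i, j i : ℕ):ℝ) + 2*(d:ℝ)) := by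
        congr 1
        push_cast
        ring

lemma wt_rpow_lower {d : ℕ} {j : Fin d → ℕ} {k : Fin d → ℤ}
    (hk : k ∈ Fintype.piFinset (fun i => blockF (j i))) {α : ℝ} (hα : 0 ≤ α) :
    (2:ℝ≥0∞) ^ (((∑ i, j i : ℕ):ℝ) * α)
      ≤ (2:ℝ≥0∞)^((d:ℝ)*α) * ENNReal.ofReal (wt d k ^ α) := by
  rw [Fintype.mem_piFinset] at hk
  have hreal : (2:ℝ)^(∑ i, j i) ≤ 2^d * wt d k := by
    calc (2:ℝ)^(∑ i, j i) = ∏ i : Fin d, (2:ℝ)^(j i) := (Finset.prod_pow_eq_pow_sum _ _ _).symm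
      _ ≤ ∏ i : Fin d, (2 * (1 + |((k i):ℝ)|)) :=
          Finset.prod_le_prod (fun i _ => by positivity) (fun i _ => wt_block_lower (hk i))
      _ = 2^d * wt d k := by
          rw [Finset.prod_mul_distrib, Finset.prod_const, wt]
          simp
  have hrpow : ((2:ℝ)^(∑ i, j i))^α ≤ (2^d * wt d k)^α :=
    Real.rpow_le_rpow (by positivity) hreal hα
  have hL : ((2:ℝ)^(∑ i, j i))^α = (2:ℝ)^((((∑ i, j i : ℕ)):ℝ) * α) := by
    rw [← Real.rpow_natCast 2 (∑ i, j i), ← Real.rpow_mul (by norm_num)]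
  have hR : ((2:ℝ)^d * wt d k)^α = (2:ℝ)^((d:ℝ)*α) * wt d k ^ α := by
    rw [Real.mul_rpow (by positivity) (wt_pos d k).le, ← Real.rpow_natCast 2 d,
      ← Real.rpow_mul (by norm_num)]
  rw [hL, hR] at hrpow
  calc (2:ℝ≥0∞) ^ (((∑ i, j i : ℕ):ℝ) * α)
      = ENNReal.ofReal ((2:ℝ)^((((∑ i, j i : ℕ)):ℝ) * α)) := (two_rpow _).symm
    _ ≤ ENNReal.ofReal ((2:ℝ)^((d:ℝ)*α) * wt d k ^ α) := ENNReal.ofReal_le_ofReal hrpow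
    _ = (2:ℝ≥0∞)^((d:ℝ)*α) * ENNReal.ofReal (wt d k ^ α) := by
        rw [ENNReal.ofReal_mul (by positivity), two_rpow]


lemma two_rpow_ne_zero (x : ℝ) : (2:ℝ≥0∞)^x ≠ 0 := by
  rw [← two_rpow]
  simp [ENNReal.ofReal_eq_zero, not_le]
  positivity

lemma two_rpow_ne_top (x : ℝ) : (2:ℝ≥0∞)^x ≠ ∞ := by
  rw [← two_rpow]
  exact ENNReal.ofReal_ne_top

lemma block_main (d : ℕ) (f : (Fin d → ℝ) → ℂ) (j : Fin d → ℕ) {p : ℝ≥0∞}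
    (hp1 : 2 ≤ p) (hp2 : p ≠ ∞) {α t r : ℝ} (hα : 0 ≤ α) (ht : 0 ≤ t) (ht2 : 2*t ≤ 1)
    (X : ℝ≥0∞)
    (hV1 : ∑ k ∈ Fintype.piFinset (fun i => blockF (j i)),
        ENNReal.ofReal (wt d k ^ α) * (‖fCoeff d f k‖₊ : ℝ≥0∞)
      ≤ ((Fintype.piFinset (fun i => blockF (j i))).card : ℝ≥0∞) ^ (1-t) * X)
    (hV2 : ∑ k ∈ Fintype.piFinset (fun i => blockF (j i)),
        (ENNReal.ofReal (wt d k ^ α) * (‖fCoeff d f k‖₊ : ℝ≥0∞)) ^ (2:ℝ)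
      ≤ ((Fintype.piFinset (fun i => blockF (j i))).card : ℝ≥0∞) ^ (1-2*t) * X ^ (2:ℝ)) :
    (2:ℝ≥0∞) ^ ((((∑ i, j i : ℕ)):ℝ) * r) * LqNorm d p (blockProj d f j)
      ≤ (2:ℝ≥0∞) ^ ((((∑ i, j i : ℕ)):ℝ) * r
          + ((d:ℝ)*α - (((∑ i, j i : ℕ)):ℝ)*α
              + ((((∑ i, j i : ℕ)):ℝ) + 2*d)*(1-t))*(1-2/p.toReal)
          + (2*((d:ℝ)*α - (((∑ i, j i : ℕ)):ℝ)*α)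
              + ((((∑ i, j i : ℕ)):ℝ) + 2*d)*(1-2*t))*(1/p.toReal)) * X := by
  have hb0 : (2:ℝ≥0∞) ≠ 0 := by norm_num
  have hbt : (2:ℝ≥0∞) ≠ ∞ := by norm_num
  set b : ℝ≥0∞ := 2 with hb
  set L : ℝ := (((∑ i, j i : ℕ)):ℝ) with hL
  set Λ := Fintype.piFinset (fun i => blockF (j i)) with hΛ
  set N : ℝ≥0∞ := (Λ.card : ℝ≥0∞) with hN
  set u : (Fin d → ℤ) → ℝ≥0∞ := fun k => (‖fCoeff d f k‖₊ : ℝ≥0∞) with hu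
  set v : (Fin d → ℤ) → ℝ≥0∞ :=
    fun k => ENNReal.ofReal (wt d k ^ α) * (‖fCoeff d f k‖₊ : ℝ≥0∞) with hv
  set c : ℝ := (d:ℝ)*α - L*α with hc
  have hpR : 2 ≤ p.toReal := by
    have := ENNReal.toReal_mono hp2 hp1
    simpa [hb] using this
  have hq0 : (0:ℝ) ≤ 1/p.toReal := by positivity
  have h2q : (0:ℝ) ≤ 1 - 2/p.toReal := by
    have : 2/p.toReal ≤ 1 := by
      rw [div_le_one (by linarith)]
      exact hpR
    linarith
  have ht1 : (0:ℝ) ≤ 1 - t := by linarith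
  have ht2' : (0:ℝ) ≤ 1 - 2*t := by linarith
  -- pointwise bound
  have step1 : ∀ k ∈ Λ, u k ≤ b^c * v k := by
    intro k hk
    have key : b^(L*α) * u k ≤ b^((d:ℝ)*α) * v k := by
      rw [hv]
      simp only
      rw [← mul_assoc]
      exact mul_le_mul_left (wt_rpow_lower hk hα) (u k)
    calc u k = (b^(L*α))⁻¹ * (b^(L*α) * u k) := by
          rw [← mul_assoc, ENNReal.inv_mul_cancel (two_rpow_ne_zero _) (two_rpow_ne_top _),
            one_mul]
      _ ≤ (b^(L*α))⁻¹ * (b^((d:ℝ)*α) * v k) := mul_le_mul_right key _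
      _ = b^c * v k := by
          rw [← mul_assoc, ← ENNReal.rpow_neg, ← ENNReal.rpow_add _ _ hb0 hbt, hc]
          ring_nf
  -- N bound
  have hNle : N ≤ b ^ (L + 2*(d:ℝ)) := card_piFinset_le d j
  -- A bound
  have stepA : ∑ k ∈ Λ, u k ≤ b ^ (c + (L + 2*d)*(1-t)) * X := by
    calc ∑ k ∈ Λ, u k ≤ ∑ k ∈ Λ, b^c * v k := Finset.sum_le_sum step1
      _ = b^c * ∑ k ∈ Λ, v k := by rw [Finset.mul_sum]
      _ ≤ b^c * (N ^ (1-t) * X) := mul_le_mul_right hV1 _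
      _ ≤ b^c * (b ^ ((L + 2*d)*(1-t)) * X) := by
          refine mul_le_mul_right (mul_le_mul_left ?_ X) _
          calc N ^ (1-t) ≤ (b ^ (L + 2*(d:ℝ))) ^ (1-t) := ENNReal.rpow_le_rpow hNle ht1
            _ = b ^ ((L + 2*d)*(1-t)) := by rw [← ENNReal.rpow_mul]
      _ = b ^ (c + (L + 2*d)*(1-t)) * X := by
          rw [← mul_assoc, ← ENNReal.rpow_add _ _ hb0 hbt]
  -- B bound
  have stepB : ∑ k ∈ Λ, (u k) ^ (2:ℝ) ≤ b ^ (2*c + (L + 2*d)*(1-2*t)) * X ^ (2:ℝ) := by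
    calc ∑ k ∈ Λ, (u k) ^ (2:ℝ) ≤ ∑ k ∈ Λ, (b^c * v k) ^ (2:ℝ) :=
          Finset.sum_le_sum fun k hk => ENNReal.rpow_le_rpow (step1 k hk) (by norm_num)
      _ = ∑ k ∈ Λ, b^(2*c) * (v k) ^ (2:ℝ) := by
          refine Finset.sum_congr rfl fun k _ => ?_
          rw [ENNReal.mul_rpow_of_nonneg _ _ (by norm_num : (0:ℝ) ≤ 2), ← ENNReal.rpow_mul]
          ring_nf
      _ = b^(2*c) * ∑ k ∈ Λ, (v k) ^ (2:ℝ) := by rw [Finset.mul_sum]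
      _ ≤ b^(2*c) * (N ^ (1-2*t) * X ^ (2:ℝ)) := mul_le_mul_right hV2 _
      _ ≤ b^(2*c) * (b ^ ((L + 2*d)*(1-2*t)) * X ^ (2:ℝ)) := by
          refine mul_le_mul_right (mul_le_mul_left ?_ _) _
          calc N ^ (1-2*t) ≤ (b ^ (L + 2*(d:ℝ))) ^ (1-2*t) := ENNReal.rpow_le_rpow hNle ht2'
            _ = b ^ ((L + 2*d)*(1-2*t)) := by rw [← ENNReal.rpow_mul]
      _ = b ^ (2*c + (L + 2*d)*(1-2*t)) * X ^ (2:ℝ) := by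
          rw [← mul_assoc, ← ENNReal.rpow_add _ _ hb0 hbt]
  -- combine
  have hcore : LqNorm d p (blockProj d f j)
      ≤ b ^ ((c + (L + 2*d)*(1-t))*(1-2/p.toReal) + (2*c + (L + 2*d)*(1-2*t))*(1/p.toReal))
        * X := by
    calc LqNorm d p (blockProj d f j)
        ≤ (∑ k ∈ Λ, u k) ^ (1 - 2/p.toReal) * (∑ k ∈ Λ, (u k)^(2:ℝ)) ^ (1/p.toReal) :=
          eLpNorm_trig_le d Λ (fCoeff d f) hp1 hp2
      _ ≤ (b ^ (c + (L + 2*d)*(1-t)) * X) ^ (1 - 2/p.toReal)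
          * (b ^ (2*c + (L + 2*d)*(1-2*t)) * X ^ (2:ℝ)) ^ (1/p.toReal) :=
          mul_le_mul' (ENNReal.rpow_le_rpow stepA h2q) (ENNReal.rpow_le_rpow stepB hq0)
      _ = (b ^ ((c + (L + 2*d)*(1-t))*(1-2/p.toReal)) * X ^ (1-2/p.toReal))
          * (b ^ ((2*c + (L + 2*d)*(1-2*t))*(1/p.toReal)) * X ^ (2*(1/p.toReal))) := by
          rw [ENNReal.mul_rpow_of_nonneg _ _ h2q, ENNReal.mul_rpow_of_nonneg _ _ hq0,
            ← ENNReal.rpow_mul, ← ENNReal.rpow_mul, ← ENNReal.rpow_mul]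
      _ = b ^ ((c + (L + 2*d)*(1-t))*(1-2/p.toReal) + (2*c + (L + 2*d)*(1-2*t))*(1/p.toReal))
          * (X ^ (1-2/p.toReal) * X ^ (2*(1/p.toReal))) := by
          rw [ENNReal.rpow_add _ _ hb0 hbt]
          ring
      _ = _ := by
          rw [← ENNReal.rpow_add_of_nonneg _ _ h2q (by positivity)]
          have : (1-2/p.toReal) + 2*(1/p.toReal) = 1 := by ring
          rw [this, ENNReal.rpow_one]
  calc b ^ (L * r) * LqNorm d p (blockProj d f j)
      ≤ b ^ (L * r) * (b ^ ((c + (L + 2*d)*(1-t))*(1-2/p.toReal)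
          + (2*c + (L + 2*d)*(1-2*t))*(1/p.toReal)) * X) := mul_le_mul_right hcore _
    _ = _ := by
        rw [← mul_assoc, ← ENNReal.rpow_add _ _ hb0 hbt, add_assoc]



theorem statement10 (d : ℕ) (hd : 1 ≤ d) (p θ : ℝ≥0∞) (hp1 : 2 ≤ p) (hp2 : p ≠ ∞)
    (hθ : 2 ≤ θ) (r : ℝ) (hr : 0 ≤ r) :
    ∃ C : ℝ, 0 < C ∧ ∀ f : (Fin d → ℝ) → ℂ, IntegrableOn f (cube d) →
      besovNorm d r p θ f ≤
        ENNReal.ofReal C * wienerNorm d (r + 1 - 1/p.toReal - 1/θ.toReal) θ f := by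
  have hpR : 2 ≤ p.toReal := by
    have := ENNReal.toReal_mono hp2 hp1
    simpa using this
  have hpinv : 1/p.toReal ≤ 1/2 := by
    rw [div_le_div_iff₀ (by linarith) (by norm_num)]
    linarith
  set α : ℝ := r + 1 - 1/p.toReal - 1/θ.toReal with hαdef
  by_cases hθt : θ = ∞
  · -- θ = ∞
    have hτ0 : θ.toReal = 0 := by rw [hθt]; simp
    have hα : 0 ≤ α := by
      have h' : (0:ℝ) ≤ 1 - 1/p.toReal := by linarith
      rw [hαdef, hτ0]
      simp only [_root_.div_zero, sub_zero]
      linarith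
    refine ⟨(2:ℝ) ^ ((d:ℝ)*α + 2*(d:ℝ)*(1 - 1/p.toReal)), by positivity, fun f _ => ?_⟩
    rw [besovNorm, if_pos hθt, wienerNorm, if_pos hθt, two_rpow]
    set W := ⨆ k : Fin d → ℤ, ENNReal.ofReal (wt d k ^ α) * (‖fCoeff d f k‖₊ : ℝ≥0∞) with hW
    refine iSup_le fun j => ?_
    rw [two_rpow]
    set Λ := Fintype.piFinset (fun i => blockF (j i)) with hΛ
    set N : ℝ≥0∞ := (Λ.card : ℝ≥0∞) with hN
    have hvW : ∀ k : Fin d → ℤ, ENNReal.ofReal (wt d k ^ α) * (‖fCoeff d f k‖₊ : ℝ≥0∞) ≤ W :=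
      fun k => le_iSup (fun k => ENNReal.ofReal (wt d k ^ α) * (‖fCoeff d f k‖₊ : ℝ≥0∞)) k
    have hV1 : ∑ k ∈ Λ, ENNReal.ofReal (wt d k ^ α) * (‖fCoeff d f k‖₊ : ℝ≥0∞)
        ≤ N ^ (1-(0:ℝ)) * W := by
      rw [show (1:ℝ) - 0 = 1 by norm_num, ENNReal.rpow_one]
      calc ∑ k ∈ Λ, ENNReal.ofReal (wt d k ^ α) * (‖fCoeff d f k‖₊ : ℝ≥0∞)
          ≤ ∑ _k ∈ Λ, W := Finset.sum_le_sum fun k _ => hvW k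
        _ = N * W := by rw [Finset.sum_const, nsmul_eq_mul]
    have hV2 : ∑ k ∈ Λ, (ENNReal.ofReal (wt d k ^ α) * (‖fCoeff d f k‖₊ : ℝ≥0∞)) ^ (2:ℝ)
        ≤ N ^ (1-2*(0:ℝ)) * W ^ (2:ℝ) := by
      rw [show (1:ℝ) - 2*0 = 1 by norm_num, ENNReal.rpow_one]
      calc ∑ k ∈ Λ, (ENNReal.ofReal (wt d k ^ α) * (‖fCoeff d f k‖₊ : ℝ≥0∞)) ^ (2:ℝ)
          ≤ ∑ _k ∈ Λ, W ^ (2:ℝ) :=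
            Finset.sum_le_sum fun k _ => ENNReal.rpow_le_rpow (hvW k) (by norm_num)
        _ = N * W ^ (2:ℝ) := by rw [Finset.sum_const, nsmul_eq_mul]
    have hEK : ((((∑ i, j i : ℕ)):ℝ) * r
          + ((d:ℝ)*α - (((∑ i, j i : ℕ)):ℝ)*α
              + ((((∑ i, j i : ℕ)):ℝ) + 2*d)*(1-(0:ℝ)))*(1-2/p.toReal)
          + (2*((d:ℝ)*α - (((∑ i, j i : ℕ)):ℝ)*α)
              + ((((∑ i, j i : ℕ)):ℝ) + 2*d)*(1-2*(0:ℝ)))*(1/p.toReal))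
        = (d:ℝ)*α + 2*(d:ℝ)*(1 - 1/p.toReal) := by
      rw [hαdef, hτ0]
      simp only [_root_.div_zero, sub_zero]
      ring
    refine le_trans (block_main d f j hp1 hp2 (r := r) hα (le_refl (0:ℝ)) (by norm_num) W hV1 hV2)
      (le_of_eq ?_)
    rw [hEK]
  · -- θ ≠ ∞
    have hθR : 2 ≤ θ.toReal := by
      have := ENNReal.toReal_mono hθt hθ
      simpa using this
    have hθ0 : θ.toReal ≠ 0 := by linarith
    set τ := θ.toReal with hτ
    set t : ℝ := 1/τ with htdef
    have ht : 0 ≤ t := by positivity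
    have ht2 : 2*t ≤ 1 := by
      rw [htdef, mul_one_div, div_le_one (by linarith)]
      exact hθR
    have hα : 0 ≤ α := by
      rw [hαdef]
      have : 1/θ.toReal ≤ 1/2 := by
        rw [div_le_div_iff₀ (by linarith) (by norm_num)]
        linarith
      linarith
    set K : ℝ := (d:ℝ)*α + 2*(d:ℝ)*(1 - t - 1/p.toReal) with hK
    refine ⟨(2:ℝ) ^ K, by positivity, fun f _ => ?_⟩
    rw [besovNorm, if_neg hθt, wienerNorm, if_neg hθt, two_rpow]
    set v : (Fin d → ℤ) → ℝ≥0∞ :=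
      fun k => ENNReal.ofReal (wt d k ^ α) * (‖fCoeff d f k‖₊ : ℝ≥0∞) with hv
    have key : ∀ j : Fin d → ℕ,
        (ENNReal.ofReal ((2:ℝ) ^ (((∑ i, j i : ℕ) : ℝ) * r)) * LqNorm d p (blockProj d f j))
          ^ τ
        ≤ (2:ℝ≥0∞) ^ (K * τ) * ∑ k ∈ Fintype.piFinset (fun i => blockF (j i)), v k ^ τ := by
      intro j
      set Λ := Fintype.piFinset (fun i => blockF (j i)) with hΛ
      set N : ℝ≥0∞ := (Λ.card : ℝ≥0∞) with hN
      set S : ℝ≥0∞ := ∑ k ∈ Λ, v k ^ τ with hS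
      have hV1 : ∑ k ∈ Λ, v k ≤ N ^ (1-t) * (S ^ (1/τ)) := holder_sum Λ v (by linarith)
      have hV2 : ∑ k ∈ Λ, v k ^ (2:ℝ) ≤ N ^ (1-2*t) * (S ^ (1/τ)) ^ (2:ℝ) := by
        have h := holder_sum Λ (fun k => v k ^ (2:ℝ)) (e := τ/2) (by linarith)
        have e1 : (1:ℝ) - 1/(τ/2) = 1 - 2*t := by
          rw [htdef]
          field_simp
        have e2 : ∀ k, (v k ^ (2:ℝ)) ^ (τ/2) = v k ^ τ := by
          intro k
          rw [← ENNReal.rpow_mul, show (2:ℝ)*(τ/2) = τ by ring]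
        have e3 : (S ^ (1/τ)) ^ (2:ℝ) = S ^ ((1:ℝ)/(τ/2)) := by
          rw [← ENNReal.rpow_mul]
          congr 1
          rw [eq_div_iff (by linarith : τ/2 ≠ 0)]
          field_simp
        rw [e1, Finset.sum_congr rfl (fun k _ => e2 k)] at h
        rw [e3]
        exact h
      have hmain := block_main d f j hp1 hp2 (r := r) hα ht ht2 (S ^ (1/τ)) hV1 hV2
      have hE : ((((∑ i, j i : ℕ)):ℝ) * r
          + ((d:ℝ)*α - (((∑ i, j i : ℕ)):ℝ)*α
              + ((((∑ i, j i : ℕ)):ℝ) + 2*d)*(1-t))*(1-2/p.toReal)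
          + (2*((d:ℝ)*α - (((∑ i, j i : ℕ)):ℝ)*α)
              + ((((∑ i, j i : ℕ)):ℝ) + 2*d)*(1-2*t))*(1/p.toReal)) = K := by
        rw [hK, hαdef, htdef, hτ]
        have hp0 : p.toReal ≠ 0 := by linarith
        field_simp
        ring
      rw [hE] at hmain
      calc (ENNReal.ofReal ((2:ℝ) ^ (((∑ i, j i : ℕ) : ℝ) * r)) * LqNorm d p (blockProj d f j))
            ^ τ
          = ((2:ℝ≥0∞) ^ ((((∑ i, j i : ℕ)):ℝ) * r) * LqNorm d p (blockProj d f j)) ^ τ := by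
            rw [two_rpow]
        _ ≤ ((2:ℝ≥0∞) ^ K * S ^ (1/τ)) ^ τ := ENNReal.rpow_le_rpow hmain (by linarith)
        _ = (2:ℝ≥0∞) ^ (K * τ) * S := by
            rw [ENNReal.mul_rpow_of_nonneg _ _ (by linarith : (0:ℝ) ≤ τ), ← ENNReal.rpow_mul,
              ← ENNReal.rpow_mul, one_div_mul_cancel hθ0, ENNReal.rpow_one]
    calc (∑' j : Fin d → ℕ,
        (ENNReal.ofReal ((2:ℝ) ^ (((∑ i, j i : ℕ) : ℝ) * r)) * LqNorm d p (blockProj d f j))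
          ^ τ) ^ (1/τ)
        ≤ (∑' j : Fin d → ℕ, (2:ℝ≥0∞) ^ (K * τ)
            * ∑ k ∈ Fintype.piFinset (fun i => blockF (j i)), v k ^ τ) ^ (1/τ) :=
          ENNReal.rpow_le_rpow (ENNReal.tsum_le_tsum key) (by positivity)
      _ = ((2:ℝ≥0∞) ^ (K * τ) * ∑' j : Fin d → ℕ,
            ∑ k ∈ Fintype.piFinset (fun i => blockF (j i)), v k ^ τ) ^ (1/τ) := by
          rw [ENNReal.tsum_mul_left]
      _ ≤ ((2:ℝ≥0∞) ^ (K * τ) * ∑' k : Fin d → ℤ, v k ^ τ) ^ (1/τ) :=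
          ENNReal.rpow_le_rpow (mul_le_mul_right (sum_blocks_le _) _) (by positivity)
      _ = (2:ℝ≥0∞) ^ K * (∑' k : Fin d → ℤ, v k ^ τ) ^ (1/τ) := by
          rw [ENNReal.mul_rpow_of_nonneg _ _ (by positivity), ← ENNReal.rpow_mul,
            mul_one_div, mul_div_assoc, div_self hθ0, mul_one]


end Paper
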